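/- Define, for integers n ≥ 1 and 1 ≤ k < n/2, R(n,k) = (2^n − 2·Σ_{s=n−k+1}^{n−1} C(n,s)) / 2^n. There exists N such that for all n ≥ N and all integers k with 1 ≤ k ≤ n/2 − sqrt(n·ln 4 / 2), one has R(n,k) ≥ 1/2. -/
import Mathlib

/-- The ratio of Pareto optimal solutions of the OneJump–ZeroJump problem with problem size
`n` and jump parameter `k`: R(n,k) = (2^n − 2·Σ_{s=n−k+1}^{n−1} C(n,s)) / 2^n. -/
noncomputable def Rojzj (n k : ℕ) : ℝ :=
  ((2 : ℝ) ^ n - 2 * ∑ s ∈ Finset.Icc (n - k + 1) (n - 1), (n.choose s : ℝ)) / 2 ^ n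

open Finset Real

lemma centralBinom_sq (m : ℕ) :
    ((Nat.centralBinom m : ℝ))^2 * (2*m+1) ≤ 16^m := by
  induction m with
  | zero => simp [Nat.centralBinom]
  | succ m ih =>
    have h := Nat.succ_mul_centralBinom_succ m
    have h' : ((m:ℝ)+1) * (Nat.centralBinom (m+1) : ℝ) = 2*(2*m+1) * (Nat.centralBinom m : ℝ) := by
      exact_mod_cast congrArg (Nat.cast (R := ℝ)) h
    have hpos : (0:ℝ) < ((m:ℝ)+1)^2 := by positivity
    have e : ((m:ℝ)+1)^2 * ((Nat.centralBinom (m+1):ℝ))^2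
        = (2*(2*(m:ℝ)+1))^2 * ((Nat.centralBinom m:ℝ))^2 := by
      rw [← mul_pow, h', mul_pow]
    have h16 : (0:ℝ) ≤ 16^m := by positivity
    have key : ((m:ℝ)+1)^2 * ((Nat.centralBinom (m+1) : ℝ)^2 * (2*(m+1)+1))
        ≤ ((m:ℝ)+1)^2 * 16^(m+1) := by
      calc ((m:ℝ)+1)^2 * ((Nat.centralBinom (m+1) : ℝ)^2 * (2*(m+1)+1))
          = (4*(2*(m:ℝ)+1)*(2*(m:ℝ)+3)) * (((Nat.centralBinom m:ℝ))^2*(2*(m:ℝ)+1)) := by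
            linear_combination (2*(m:ℝ)+3) * e
        _ ≤ (4*(2*(m:ℝ)+1)*(2*(m:ℝ)+3)) * 16^m := by
            apply mul_le_mul_of_nonneg_left ih (by positivity)
        _ ≤ ((m:ℝ)+1)^2 * 16^(m+1) := by
            have e2 : (16:ℝ)^(m+1) = 16^m*16 := pow_succ 16 m
            nlinarith [h16]
    have := le_of_mul_le_mul_left key hpos
    exact_mod_cast this

lemma le_of_sq_le_sq' (a b : ℝ) (hb : 0 ≤ b) (h : a^2 ≤ b^2) : a ≤ b := by
  nlinarith [sq_nonneg (a - b), sq_nonneg (a + b)]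

lemma choose_half_le (n : ℕ) (hn : 1 ≤ n) :
    (n.choose ((n+1)/2) : ℝ) ≤ 2^n / Real.sqrt n := by
  have hn0 : (0:ℝ) ≤ (n:ℝ) := by positivity
  have hs : (0:ℝ) < Real.sqrt n := Real.sqrt_pos.2 (by exact_mod_cast hn)
  rw [le_div_iff₀ hs]
  rcases Nat.even_or_odd n with ⟨m, hm⟩ | ⟨m, hm⟩
  · subst hm
    have hm1 : 1 ≤ m := by omega
    have hidx : (m + m + 1)/2 = m := by omega
    have hcb : (m+m).choose m = Nat.centralBinom m := by
      rw [Nat.centralBinom]; congr 1; omega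
    rw [hidx, hcb]
    apply le_of_sq_le_sq' _ _ (by positivity)
    have hsq : (Real.sqrt (m+m:ℕ))^2 = ((m+m:ℕ):ℝ) := Real.sq_sqrt (by positivity)
    have hpow : ((2:ℝ)^(m+m))^2 = 16^m := by
      rw [← pow_mul]
      norm_num
      rw [show (m+m)*2 = 4*m by ring, pow_mul]
      norm_num
    rw [mul_pow, hsq, hpow]
    have := centralBinom_sq m
    push_cast
    nlinarith [sq_nonneg ((Nat.centralBinom m : ℝ))]
  · subst hm
    have hidx : (2*m + 1 + 1)/2 = m + 1 := by omega
    rw [hidx]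
    have hch : (2*m+1).choose (m+1) = (2*m).choose m + (2*m).choose (m+1) :=
      Nat.choose_succ_succ (2*m) m
    have hle : (2*m+1).choose (m+1) ≤ 2 * Nat.centralBinom m := by
      have a := Nat.choose_le_centralBinom m m
      have b := Nat.choose_le_centralBinom (m+1) m
      omega
    have hle' : ((2*m+1).choose (m+1) : ℝ) ≤ 2 * Nat.centralBinom m := by exact_mod_cast hle
    refine le_trans (mul_le_mul_of_nonneg_right hle' hs.le) ?_
    apply le_of_sq_le_sq' _ _ (by positivity)
    have hsq : (Real.sqrt (2*m+1:ℕ))^2 = ((2*m+1:ℕ):ℝ) := Real.sq_sqrt (by positivity)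
    have hpow : ((2:ℝ)^(2*m+1))^2 = 4 * 16^m := by
      rw [← pow_mul]
      rw [show (2*m+1)*2 = 4*m + 2 by ring, pow_add, pow_mul]
      norm_num; ring
    rw [mul_pow, mul_pow, hsq, hpow]
    have := centralBinom_sq m
    push_cast
    nlinarith [sq_nonneg ((Nat.centralBinom m : ℝ))]

lemma choose_ratio (n s : ℕ) (h : s < n) :
    (n.choose (s+1) : ℝ) * ((s:ℝ)+1) = (n.choose s : ℝ) * ((n:ℝ) - s) := by
  have h1 := congrArg (Nat.cast (R:=ℝ)) (Nat.choose_succ_right_eq n s)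
  push_cast [Nat.cast_sub h.le] at h1
  linarith

lemma sum_odd_sq (t : ℕ) : ∑ i ∈ range t, (2*(i:ℝ)+1) = (t:ℝ)^2 := by
  induction t with
  | zero => simp
  | succ t ih => rw [Finset.sum_range_succ, ih]; push_cast; ring

lemma geom_sum_le_inv (r : ℝ) (h0 : 0 ≤ r) (h1 : r < 1) (M : ℕ) :
    ∑ i ∈ range M, r^i ≤ 1/(1-r) := by
  have h := geom_sum_mul r M
  have hlt : (0:ℝ) < 1 - r := by linarith
  rw [le_div_iff₀ hlt]
  nlinarith [pow_nonneg h0 M]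

lemma choose_geom (n m : ℕ) (hm : m ≤ n) (j : ℕ) :
    (n.choose (m+j) : ℝ) ≤ (n.choose m : ℝ) * (((n:ℝ)-(m:ℝ))/((m:ℝ)+1))^j := by
  set r := ((n:ℝ)-(m:ℝ))/((m:ℝ)+1) with hrdef
  have hr0 : 0 ≤ r := by
    apply div_nonneg
    · have : (m:ℝ) ≤ n := by exact_mod_cast hm
      linarith
    · positivity
  induction j with
  | zero => simp
  | succ j ih =>
    rw [show m + (j+1) = m + j + 1 by omega]
    by_cases hcase : m + j < n
    · have hr := choose_ratio n (m+j) hcase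
      have hpos : (0:ℝ) < (m:ℝ)+(j:ℝ)+1 := by positivity
      have heq : (n.choose (m+j+1) : ℝ)
          = (n.choose (m+j):ℝ) * (((n:ℝ) - ((m:ℝ)+(j:ℝ)))/((m:ℝ)+(j:ℝ)+1)) := by
        field_simp
        push_cast at hr
        linarith
      have hnm : (m:ℝ) ≤ (n:ℝ) := by exact_mod_cast hm
      have hnmj : (m:ℝ) + (j:ℝ) ≤ (n:ℝ) := by exact_mod_cast hcase.le
      have hf : ((n:ℝ) - ((m:ℝ)+(j:ℝ)))/((m:ℝ)+(j:ℝ)+1) ≤ r := by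
        rw [hrdef]
        apply div_le_div₀ (by linarith) (by linarith) (by positivity) (by linarith [Nat.cast_nonneg (α := ℝ) j])
      have hf0 : (0:ℝ) ≤ ((n:ℝ) - ((m:ℝ)+(j:ℝ)))/((m:ℝ)+(j:ℝ)+1) := by
        apply div_nonneg (by linarith) (by positivity)
      calc (n.choose (m+j+1):ℝ)
          = (n.choose (m+j):ℝ) * (((n:ℝ) - ((m:ℝ)+(j:ℝ)))/((m:ℝ)+(j:ℝ)+1)) := heq
        _ ≤ ((n.choose m : ℝ) * r^j) * r := by
            apply mul_le_mul ih hf hf0 (by positivity)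
        _ = (n.choose m : ℝ) * r^(j+1) := by ring
    · have hlt : n < m + j + 1 := by omega
      rw [Nat.choose_eq_zero_of_lt hlt]
      push_cast
      positivity

lemma choose_decay (n a : ℕ) (ha : n ≤ 2*a) :
    ∀ j, a + j ≤ n → (n.choose (a+j) : ℝ) ≤ (n.choose a : ℝ) *
      Real.exp (-(∑ i ∈ range j, ((2*((a:ℝ)+(i:ℝ))+1 - (n:ℝ))/((a:ℝ)+(i:ℝ)+1)))) := by
  intro j
  induction j with
  | zero => intro _; simp
  | succ j ih =>
    intro hj
    have hj' : a + j ≤ n := by omega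
    have hltn : a + j < n := by omega
    have ihh := ih hj'
    have hr := choose_ratio n (a+j) hltn
    have hpos : (0:ℝ) < (a:ℝ)+(j:ℝ)+1 := by positivity
    have heq : (n.choose (a+j+1) : ℝ)
        = (n.choose (a+j):ℝ) * (((n:ℝ) - ((a:ℝ)+(j:ℝ)))/((a:ℝ)+(j:ℝ)+1)) := by
      field_simp
      push_cast at hr
      linarith
    set x : ℝ := (2*((a:ℝ)+(j:ℝ))+1 - (n:ℝ))/((a:ℝ)+(j:ℝ)+1) with hx
    have hfac : ((n:ℝ) - ((a:ℝ)+(j:ℝ)))/((a:ℝ)+(j:ℝ)+1) ≤ Real.exp (-x) := by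
      have h1 : ((n:ℝ) - ((a:ℝ)+(j:ℝ)))/((a:ℝ)+(j:ℝ)+1) = 1 - x := by
        rw [hx]; field_simp; ring
      rw [h1]
      linarith [Real.add_one_le_exp (-x)]
    have hfac0 : (0:ℝ) ≤ ((n:ℝ) - ((a:ℝ)+(j:ℝ)))/((a:ℝ)+(j:ℝ)+1) := by
      have : (a:ℝ) + (j:ℝ) ≤ (n:ℝ) := by exact_mod_cast hltn.le
      apply div_nonneg (by linarith) hpos.le
    have hsum : Real.exp (-(∑ i ∈ range (j+1), ((2*((a:ℝ)+(i:ℝ))+1 - (n:ℝ))/((a:ℝ)+(i:ℝ)+1))))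
        = Real.exp (-(∑ i ∈ range j, ((2*((a:ℝ)+(i:ℝ))+1 - (n:ℝ))/((a:ℝ)+(i:ℝ)+1)))) * Real.exp (-x) := by
      rw [Finset.sum_range_succ, neg_add, Real.exp_add, hx]
    rw [show a + (j+1) = a + j + 1 by omega, heq, hsum, ← mul_assoc]
    apply mul_le_mul ihh hfac hfac0 (by positivity)

lemma cube_le_exp (x : ℝ) (hx : 0 ≤ x) : (1+x/3)^3 ≤ Real.exp x := by
  have h := Real.add_one_le_exp (x/3)
  have h0 : (0:ℝ) ≤ 1 + x/3 := by linarith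
  calc (1+x/3)^3 ≤ (Real.exp (x/3))^3 := by
        apply pow_le_pow_left₀ h0 (by linarith)
    _ = Real.exp x := by rw [← Real.exp_nat_mul]; norm_num; ring_nf


lemma aux_sqrt_lb (nR s : ℝ) (h : 1000000 ≤ nR) (hs0 : 0 ≤ s) (hs2 : s^2 = nR) :
    1000 ≤ s := by nlinarith

lemma aux_u_lb (nR s u L : ℝ) (hL1 : 0.6931471803 < L)
    (hs0 : 0 ≤ s) (hs2 : s^2 = nR) (hu0 : 0 ≤ u) (hu2 : u^2 = nR * L) :
    0.832*s ≤ u := by nlinarith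

lemma aux_u_ub (nR s u L : ℝ) (hL2 : L < 0.6931471808)
    (hs0 : 0 ≤ s) (hs2 : s^2 = nR) (hu0 : 0 ≤ u) (hu2 : u^2 = nR * L) :
    u ≤ 0.834*s := by nlinarith

lemma aux_E0 (nR s u L : ℝ) (hL1 : 0.6931471803 < L)
    (hs0 : 0 ≤ s) (hs2 : s^2 = nR) (hs1000 : 1000 ≤ s) (hu0 : 0 ≤ u) (hu2 : u^2 = nR*L)
    (hu_ub : u ≤ 0.834*s) :
    1.38 * ((nR+1)/2 + u) ≤ u^2 := by nlinarith

lemma aux_h2 (nR s u : ℝ) (hs0 : 0 ≤ s) (hs2 : s^2 = nR) (hs1000 : 1000 ≤ s)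
    (hu_lb : 0.832*s ≤ u) :
    4*(nR+1) ≤ 2*u*s*(3.112136) := by
  nlinarith [mul_le_mul_of_nonneg_right hu_lb hs0]

lemma aux_mono (t u s E : ℝ) (hu0 : 0 ≤ u) (hs0 : 0 ≤ s) (htu : u ≤ t) (hE : 3.112136 ≤ E) :
    2*u*s*(3.112136) ≤ 2*t*s*E := by
  have hE0 : (0:ℝ) ≤ E := by linarith
  calc 2*u*s*(3.112136:ℝ) ≤ 2*u*s*E := by
        apply mul_le_mul_of_nonneg_left hE (by positivity)
    _ ≤ 2*t*s*E := by
        apply mul_le_mul_of_nonneg_right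
          (mul_le_mul_of_nonneg_right (by linarith : 2*u ≤ 2*t) hs0) hE0

lemma aux_cross (t u B : ℝ) (hu0 : 0 ≤ u) (htu : u ≤ t) (hB : 0 ≤ B) :
    u^2*(B + t) ≤ t^2*(B + u) := by
  nlinarith [mul_nonneg (mul_nonneg hu0 (le_trans hu0 htu)) (sub_nonneg.2 htu),
    mul_nonneg (mul_nonneg (sub_nonneg.2 htu) (by linarith : 0 ≤ t + u)) hB]


set_option maxHeartbeats 4000000 in
/-- There exists N such that for all n ≥ N and all integers k with
1 ≤ k ≤ n/2 − sqrt(n·ln 4 / 2), one has R(n,k) ≥ 1/2. -/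
theorem OJZJ_ratio_half :
    ∃ N : ℕ, ∀ n : ℕ, N ≤ n → ∀ k : ℕ, 1 ≤ k →
      (k : ℝ) ≤ (n : ℝ) / 2 - Real.sqrt ((n : ℝ) * Real.log 4 / 2) →
      (1 / 2 : ℝ) ≤ Rojzj n k := by
  use 1000000
  intro n hn k hk1 hk
  have hlog4 : Real.log 4 = 2 * Real.log 2 := by
    rw [show (4:ℝ) = 2^2 by norm_num, Real.log_pow]; push_cast; ring
  set L := Real.log 2 with hLdef
  have hL1 : 0.6931471803 < L := Real.log_two_gt_d9
  have hL2 : L < 0.6931471808 := Real.log_two_lt_d9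
  have hu_eq : (n:ℝ) * Real.log 4 / 2 = (n:ℝ) * L := by rw [hlog4]; ring
  rw [hu_eq] at hk
  set u := Real.sqrt ((n:ℝ) * L) with hudef
  have hnR : (1000000:ℝ) ≤ (n:ℝ) := by exact_mod_cast hn
  have hn1 : 1 ≤ n := by omega
  set s := Real.sqrt (n:ℝ) with hsdef
  have hs0 : 0 ≤ s := Real.sqrt_nonneg _
  have hs2 : s^2 = (n:ℝ) := Real.sq_sqrt (by positivity)
  have hs1000 : (1000:ℝ) ≤ s := aux_sqrt_lb _ _ hnR hs0 hs2
  have hu0 : 0 ≤ u := Real.sqrt_nonneg _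
  have hu2 : u^2 = (n:ℝ) * L := Real.sq_sqrt (mul_nonneg (by positivity) (by linarith))
  have hu_ub : u ≤ 0.834 * s := aux_u_ub _ _ _ _ hL2 hs0 hs2 hu0 hu2
  have hu_lb : 0.832 * s ≤ u := aux_u_lb _ _ _ _ hL1 hs0 hs2 hu0 hu2
  -- basic nat facts
  have hk_le : (k:ℝ) ≤ (n:ℝ)/2 := by linarith
  have hkn : k ≤ n := by
    have : (k:ℝ) ≤ (n:ℝ) := by linarith
    exact_mod_cast this
  set a := (n+1)/2 with hadef
  have ha2 : n ≤ 2*a := by omega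
  have haR : (a:ℝ) ≤ ((n:ℝ)+1)/2 := by
    have h2 : (a:ℝ)*2 ≤ (n:ℝ)+1 := by exact_mod_cast (by omega : a*2 ≤ n+1)
    linarith
  have haR' : ((n:ℝ)) ≤ 2*(a:ℝ) := by exact_mod_cast ha2
  set m := n - k + 1 with hmdef
  have hmcast : (m:ℝ) = (n:ℝ) - (k:ℝ) + 1 := by
    rw [hmdef]; push_cast [Nat.cast_sub hkn]; ring
  have hmR_lb : (n:ℝ)/2 + u + 1 ≤ (m:ℝ) := by rw [hmcast]; linarith
  have ham : a + 1 ≤ m := by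
    have h : (a:ℝ) + 1 ≤ (m:ℝ) := by
      have : u ≥ 800 := by linarith
      linarith
    exact_mod_cast h
  have hmn : m ≤ n := by omega
  have hmn' : (m:ℝ) ≤ (n:ℝ) := by exact_mod_cast hmn
  set t := m - a with htdef
  have hat : a + t = m := by omega
  have htcast : (t:ℝ) = (m:ℝ) - (a:ℝ) := by
    rw [htdef]; push_cast [Nat.cast_sub (show a ≤ m by omega)]; ring
  have htu : u + 1/2 ≤ (t:ℝ) := by rw [htcast]; linarith
  have ht0 : (0:ℝ) < (t:ℝ) := by linarith
  have hm0 : (0:ℝ) < (m:ℝ) := by linarith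
  -- the sum bound
  set S := ∑ x ∈ Finset.Icc (n - k + 1) (n - 1), (n.choose x : ℝ) with hSdef
  have hSbound : S ≤ 2^n/4 := by
    set r := ((n:ℝ)-(m:ℝ))/((m:ℝ)+1) with hrdef
    have hr0 : 0 ≤ r := div_nonneg (by linarith) (by linarith)
    have h2m : (n:ℝ) + 2 ≤ 2*(m:ℝ) := by
      have : (a:ℝ) + 1 ≤ (m:ℝ) := by exact_mod_cast ham
      linarith
    have h1r : (2*(t:ℝ))/((n:ℝ)+1) ≤ 1 - r := by
      have e : 1 - r = (2*(m:ℝ)+1-(n:ℝ))/((m:ℝ)+1) := by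
        rw [hrdef]; field_simp; ring
      rw [e]
      apply div_le_div₀ (by linarith) ?_ (by linarith) (by linarith)
      · -- 2t ≤ 2m+1-n : since 2m+1-n = 2(a+t)+1-n ≥ 2t+1
        have : (a:ℝ) + (t:ℝ) = (m:ℝ) := by exact_mod_cast hat
        linarith
    have hr1 : r < 1 := by
      have hpos : (0:ℝ) < (2*(t:ℝ))/((n:ℝ)+1) := by positivity
      linarith
    -- step 1 : S ≤ sum over Icc m n
    have step1 : S ≤ ∑ x ∈ Finset.Icc m n, (n.choose x : ℝ) := by
      rw [hSdef]
      apply Finset.sum_le_sum_of_subset_of_nonneg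
      · apply Finset.Icc_subset_Icc_right; omega
      · intro i _ _; positivity
    -- step 2 : reindex and geometric bound
    have step2 : ∑ x ∈ Finset.Icc m n, (n.choose x : ℝ) ≤ (n.choose m : ℝ) * (1/(1-r)) := by
      rw [← Finset.Ico_add_one_right_eq_Icc, Finset.sum_Ico_eq_sum_range]
      calc ∑ j ∈ range (n+1-m), (n.choose (m+j) : ℝ)
          ≤ ∑ j ∈ range (n+1-m), (n.choose m : ℝ) * r^j := by
            apply Finset.sum_le_sum
            intro j _
            exact choose_geom n m hmn j
        _ = (n.choose m : ℝ) * ∑ j ∈ range (n+1-m), r^j := by rw [Finset.mul_sum]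
        _ ≤ (n.choose m : ℝ) * (1/(1-r)) := by
            apply mul_le_mul_of_nonneg_left (geom_sum_le_inv r hr0 hr1 _) (by positivity)
    -- step 3 : 1/(1-r) ≤ (n+1)/(2t)
    have step3 : 1/(1-r) ≤ ((n:ℝ)+1)/(2*(t:ℝ)) := by
      have hpos : (0:ℝ) < (2*(t:ℝ))/((n:ℝ)+1) := by positivity
      have := one_div_le_one_div_of_le hpos h1r
      rwa [one_div_div] at this
    -- step 4 : choose m ≤ choose a * exp(-t²/m)
    have step4 : (n.choose m : ℝ) ≤ (n.choose a : ℝ) * Real.exp (-((t:ℝ)^2/(m:ℝ))) := by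
      have hd := choose_decay n a ha2 t (by omega)
      rw [hat] at hd
      refine hd.trans ?_
      apply mul_le_mul_of_nonneg_left ?_ (by positivity)
      rw [Real.exp_le_exp, neg_le_neg_iff]
      -- t²/m ≤ ∑ x_i
      calc (t:ℝ)^2/(m:ℝ) = (∑ i ∈ range t, (2*(i:ℝ)+1))/(m:ℝ) := by rw [sum_odd_sq]
        _ = ∑ i ∈ range t, (2*(i:ℝ)+1)/(m:ℝ) := Finset.sum_div _ _ _
        _ ≤ ∑ i ∈ range t, ((2*((a:ℝ)+(i:ℝ))+1 - (n:ℝ))/((a:ℝ)+(i:ℝ)+1)) := by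
            apply Finset.sum_le_sum
            intro i hi
            have hi' : (i:ℝ) + 1 ≤ (t:ℝ) := by
              have := Finset.mem_range.mp hi
              exact_mod_cast this
            have haim : (a:ℝ)+(i:ℝ)+1 ≤ (m:ℝ) := by
              have : (a:ℝ) + (t:ℝ) = (m:ℝ) := by exact_mod_cast hat
              linarith
            apply div_le_div₀ (by linarith) (by linarith) (by positivity) haim
    -- step 5 : choose a ≤ 2^n / s
    have step5 : (n.choose a : ℝ) ≤ 2^n / s := by
      rw [hsdef]
      exact choose_half_le n hn1
    -- combine
    have hcomb : S ≤ (2^n/s) * Real.exp (-((t:ℝ)^2/(m:ℝ))) * (((n:ℝ)+1)/(2*(t:ℝ))) := by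
      calc S ≤ (n.choose m : ℝ) * (1/(1-r)) := step1.trans step2
        _ ≤ (n.choose m : ℝ) * (((n:ℝ)+1)/(2*(t:ℝ))) := by
            apply mul_le_mul_of_nonneg_left step3 (by positivity)
        _ ≤ ((n.choose a : ℝ) * Real.exp (-((t:ℝ)^2/(m:ℝ)))) * (((n:ℝ)+1)/(2*(t:ℝ))) := by
            apply mul_le_mul_of_nonneg_right step4 (by positivity)
        _ ≤ ((2^n/s) * Real.exp (-((t:ℝ)^2/(m:ℝ)))) * (((n:ℝ)+1)/(2*(t:ℝ))) := by
            apply mul_le_mul_of_nonneg_right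
              (mul_le_mul_of_nonneg_right step5 (by positivity)) (by positivity)
    refine hcomb.trans ?_
    -- final numeric: (2^n/s) * exp(-E) * (n+1)/(2t) ≤ 2^n/4
    -- suffices 4*(n+1) ≤ 2*t*s*exp(t²/m)
    have hexp_lb : Real.exp ((t:ℝ)^2/(m:ℝ)) ≥ (1 + (u^2/(((n:ℝ)+1)/2 + u))/3)^3 := by
      have hE : u^2/(((n:ℝ)+1)/2 + u) ≤ (t:ℝ)^2/(m:ℝ) := by
        have hB : (0:ℝ) < ((n:ℝ)+1)/2 + u := by linarith
        have h1 : u^2/(((n:ℝ)+1)/2 + u) ≤ (t:ℝ)^2/(((n:ℝ)+1)/2 + (t:ℝ)) := by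
          rw [div_le_div_iff₀ hB (by linarith)]
          have h_tu : u ≤ (t:ℝ) := by linarith
          have := aux_cross (t:ℝ) u (((n:ℝ)+1)/2) hu0 h_tu (by linarith)
          linarith
        have h2 : (t:ℝ)^2/(((n:ℝ)+1)/2 + (t:ℝ)) ≤ (t:ℝ)^2/(m:ℝ) := by
          apply div_le_div_of_nonneg_left (by positivity) hm0
          have : (a:ℝ) + (t:ℝ) = (m:ℝ) := by exact_mod_cast hat
          linarith
        linarith
      calc (1 + (u^2/(((n:ℝ)+1)/2 + u))/3)^3
          ≤ Real.exp (u^2/(((n:ℝ)+1)/2 + u)) := cube_le_exp _ (by positivity)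
        _ ≤ Real.exp ((t:ℝ)^2/(m:ℝ)) := Real.exp_le_exp.mpr hE
    -- E₀ ≥ 1.38
    have hE0 : (1.38:ℝ) ≤ u^2/(((n:ℝ)+1)/2 + u) := by
      rw [le_div_iff₀ (by linarith)]
      exact aux_E0 _ _ _ _ hL1 hs0 hs2 hs1000 hu0 hu2 hu_ub
    have hcube : (3.112136:ℝ) ≤ (1 + (u^2/(((n:ℝ)+1)/2 + u))/3)^3 := by
      calc (3.112136:ℝ) = 1.46^3 := by norm_num
        _ ≤ (1 + (u^2/(((n:ℝ)+1)/2 + u))/3)^3 := by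
            apply pow_le_pow_left₀ (by norm_num) (by linarith)
    have hfinal : 4*((n:ℝ)+1) ≤ 2*(t:ℝ)*s*Real.exp ((t:ℝ)^2/(m:ℝ)) := by
      have he : (3.112136:ℝ) ≤ Real.exp ((t:ℝ)^2/(m:ℝ)) := le_trans hcube hexp_lb
      have h1 : 2*u*s*(3.112136:ℝ) ≤ 2*(t:ℝ)*s*Real.exp ((t:ℝ)^2/(m:ℝ)) :=
        aux_mono _ _ _ _ hu0 hs0 (by linarith) he
      have h2 : 4*((n:ℝ)+1) ≤ 2*u*s*(3.112136:ℝ) := aux_h2 _ _ _ hs0 hs2 hs1000 hu_lb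
      linarith
    -- convert to goal
    have heq : (2^n/s) * Real.exp (-((t:ℝ)^2/(m:ℝ))) * (((n:ℝ)+1)/(2*(t:ℝ)))
        = ((2:ℝ)^n * ((n:ℝ)+1))/(s * Real.exp ((t:ℝ)^2/(m:ℝ)) * (2*(t:ℝ))) := by
      rw [Real.exp_neg]
      field_simp
      try ring
    rw [heq, div_le_div_iff₀ (by positivity) (by norm_num : (0:ℝ) < 4)]
    have h2 := mul_le_mul_of_nonneg_left hfinal (show (0:ℝ) ≤ (2:ℝ)^n by positivity)
    ring_nf at h2 ⊢
    linarith [h2]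
  -- finish from hSbound
  rw [Rojzj]
  rw [le_div_iff₀ (by positivity : (0:ℝ) < (2:ℝ)^n)]
  rw [← hSdef]
  linarith
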